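/- Let γ be a nonconstant polynomial with complex coefficients, let c ∈ ℂ, and let e₁, e₂ be complex numbers. If e₁ + (e₁ − e₂)·exp(γ(z)) = (e₁ − e₂)·(exp(−γ(z+c)) − exp(−γ(z))) for all z ∈ ℂ, then e₁ = e₂. -/

import Mathlib

/-- If `γ` is a nonconstant complex polynomial and
`e₁ + (e₁ - e₂)·exp(γ(z)) = (e₁ - e₂)·(exp(-γ(z+c)) - exp(-γ(z)))` for all `z`,
then `e₁ = e₂`. -/
theorem e1_eq_e2_of_difference_equation (γ : Polynomial ℂ) (hγ : 0 < γ.natDegree)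
    (c e₁ e₂ : ℂ)
    (h : ∀ z : ℂ, e₁ + (e₁ - e₂) * Complex.exp (γ.eval z) =
        (e₁ - e₂) * (Complex.exp (-γ.eval (z + c)) - Complex.exp (-γ.eval z))) :
    e₁ = e₂ := by
  by_contra hne
  set a := e₁ - e₂ with ha
  have ha0 : a ≠ 0 := sub_ne_zero.mpr hne
  set b : ℂ := e₁ / a with hb
  -- find a root u of u² + b u + 1 = 0
  obtain ⟨u, hu⟩ : ∃ u : ℂ, u ^ 2 + b * u + 1 = 0 := by
    obtain ⟨u, hu⟩ := Complex.exists_root (f := Polynomial.X ^ 2 + Polynomial.C b * Polynomial.X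
      + Polynomial.C 1) (by
        have hd : (Polynomial.X ^ 2 + Polynomial.C b * Polynomial.X
            + Polynomial.C 1 : Polynomial ℂ).degree = 2 := by
          compute_degree!
        rw [hd]; norm_num)
    exact ⟨u, by simpa [Polynomial.IsRoot, Polynomial.eval_add, Polynomial.eval_pow] using hu⟩
  have hu0 : u ≠ 0 := by
    intro h0
    rw [h0] at hu
    simp at hu
  -- u + u⁻¹ = -b
  have hsum : u + u⁻¹ = -b := by
    field_simp
    linear_combination hu
  -- w with exp w = u
  set w : ℂ := Complex.log u with hw
  have hexpw : Complex.exp w = u := Complex.exp_log hu0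
  -- z with γ(z) = w
  obtain ⟨z, hz⟩ : ∃ z : ℂ, γ.eval z = w := by
    obtain ⟨z, hz⟩ := Complex.exists_root (f := γ - Polynomial.C w)
      (Polynomial.natDegree_pos_iff_degree_pos.mp
        (by rw [Polynomial.natDegree_sub_C]; exact hγ))
    exact ⟨z, by simpa [Polynomial.IsRoot, sub_eq_zero] using hz⟩
  have key := h z
  rw [hz] at key
  have hnegw : Complex.exp (-w) = u⁻¹ := by
    rw [Complex.exp_neg, hexpw]
  rw [hexpw, hnegw] at key
  have : a * Complex.exp (-γ.eval (z + c)) = e₁ + a * u + a * u⁻¹ := by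
    linear_combination -key
  have hzero : e₁ + a * u + a * u⁻¹ = 0 := by
    have : a * (u + u⁻¹) = a * (-b) := by rw [hsum]
    have hb' : a * (-b) = -e₁ := by
      field_simp [hb]
      rw [hb]; field_simp
    linear_combination this + hb'
  rw [hzero] at this
  exact (mul_ne_zero ha0 (Complex.exp_ne_zero _)) this
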